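/- Let ω = e^{2πi/3}, let H be a complex Hilbert space, let R : H → H be a complex linear isometry, let u : ℂ → H be holomorphic with u(k) ≠ 0 for all k, and suppose there is a function ρ : ℂ → ℂ with u(ωk) = ρ(k)·R(u(k)) for all k ∈ ℂ. Define Θ(k) := (1/4)·Δ(log‖u(k)‖²), with Δ the Laplacian in the identification ℂ ≅ ℝ². Then Θ(ωk) = Θ(k) for all k ∈ ℂ. -/

import Mathlib

open Complex

noncomputable section

/-- `ω = e^{2πi/3}`. -/
def ω : ℂ := Complex.exp (2 * (Real.pi : ℂ) * Complex.I / 3)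

/-- The Laplacian `Δ = ∂²_{k₁} + ∂²_{k₂}` of a function on `ℂ ≅ ℝ²`. -/
def lap (f : ℂ → ℝ) : ℂ → ℝ := fun z =>
  fderiv ℝ (fun w => fderiv ℝ f w 1) z 1 +
  fderiv ℝ (fun w => fderiv ℝ f w Complex.I) z Complex.I

lemma diffAt_dir {f : ℂ → ℝ} {z : ℂ} (hf : ContDiffAt ℝ 2 f z) (v : ℂ) :
    DifferentiableAt ℝ (fun w => fderiv ℝ f w v) z := by
  have h1 : ContDiffAt ℝ 1 (fderiv ℝ f) z := hf.fderiv_right (by norm_num)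
  have h2 : DifferentiableAt ℝ (fderiv ℝ f) z := h1.differentiableAt (by norm_num)
  exact h2.clm_apply (differentiableAt_const v)

lemma lap_congr {f g : ℂ → ℝ} {z : ℂ} (h : f =ᶠ[nhds z] g) : lap f z = lap g z := by
  unfold lap
  have h1 : (fun w => fderiv ℝ f w 1) =ᶠ[nhds z] (fun w => fderiv ℝ g w 1) := by
    filter_upwards [h.fderiv (𝕜 := ℝ)] with w hw
    rw [hw]
  have h2 : (fun w => fderiv ℝ f w Complex.I) =ᶠ[nhds z] (fun w => fderiv ℝ g w Complex.I) := by
    filter_upwards [h.fderiv (𝕜 := ℝ)] with w hw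
    rw [hw]
  rw [h1.fderiv_eq, h2.fderiv_eq]

lemma lap_add {f g : ℂ → ℝ} {z : ℂ} (hf : ContDiffAt ℝ 2 f z) (hg : ContDiffAt ℝ 2 g z) :
    lap (fun w => f w + g w) z = lap f z + lap g z := by
  have hfe := hf.eventually (by norm_num)
  have hge := hg.eventually (by norm_num)
  have key : ∀ v : ℂ, fderiv ℝ (fun w => fderiv ℝ (fun x => f x + g x) w v) z v
      = fderiv ℝ (fun w => fderiv ℝ f w v) z v + fderiv ℝ (fun w => fderiv ℝ g w v) z v := by
    intro v
    have e1 : (fun w => fderiv ℝ (fun x => f x + g x) w v) =ᶠ[nhds z]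
        (fun w => fderiv ℝ f w v + fderiv ℝ g w v) := by
      filter_upwards [hfe, hge] with w h1 h2
      rw [fderiv_fun_add (h1.differentiableAt (by norm_num)) (h2.differentiableAt (by norm_num))]
      rfl
    rw [e1.fderiv_eq, fderiv_fun_add (diffAt_dir hf v) (diffAt_dir hg v)]
    rfl
  unfold lap
  rw [key 1, key Complex.I]
  ring

lemma fderiv_re_comp {h : ℂ → ℂ} {z : ℂ} (hh : DifferentiableAt ℂ h z) (v : ℂ) :
    fderiv ℝ (fun w => (h w).re) z v = (deriv h z * v).re := by
  have H : HasFDerivAt (fun w => (h w).re)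
      (Complex.reCLM.comp ((fderiv ℂ h z).restrictScalars ℝ)) z :=
    (Complex.reCLM.hasFDerivAt).comp z (hh.hasFDerivAt.restrictScalars ℝ)
  rw [H.fderiv]
  have hv : fderiv ℂ h z v = v * deriv h z := by
    conv_lhs => rw [show v = v • (1 : ℂ) by simp]
    rw [map_smul]
    simp [fderiv_apply_one_eq_deriv, smul_eq_mul]
  simp [ContinuousLinearMap.comp_apply, hv, mul_comm]

lemma lap_re_holo {g : ℂ → ℂ} {z : ℂ} (hg : ∀ᶠ w in nhds z, DifferentiableAt ℂ g w) :
    lap (fun w => (g w).re) z = 0 := by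
  have ha : AnalyticAt ℂ g z := Complex.analyticAt_iff_eventually_differentiableAt.mpr hg
  have hd : DifferentiableAt ℂ (deriv g) z :=
    (ha.fderiv.differentiableAt).clm_apply (differentiableAt_const 1)
  have key : ∀ v : ℂ, fderiv ℝ (fun w => fderiv ℝ (fun x => (g x).re) w v) z v
      = (deriv (deriv g) z * v * v).re := by
    intro v
    have e1 : (fun w => fderiv ℝ (fun x => (g x).re) w v) =ᶠ[nhds z]
        (fun w => ((fun x => deriv g x * v) w).re) := by
      filter_upwards [hg] with w hw
      rw [fderiv_re_comp hw v]
    rw [e1.fderiv_eq, fderiv_re_comp (hd.mul_const v) v, deriv_mul_const hd v]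
  unfold lap
  rw [key 1, key Complex.I]
  have h2 : deriv (deriv g) z * Complex.I * Complex.I = -(deriv (deriv g) z) := by
    rw [mul_assoc, Complex.I_mul_I, mul_neg_one]
  rw [h2]
  simp

lemma lap_comp (c : ℂ) {f : ℂ → ℝ} {z : ℂ} (hf : ContDiffAt ℝ 2 f (c * z)) :
    lap (fun w => f (c * w)) z = Complex.normSq c * lap f (c * z) := by
  have hfe : ∀ᶠ x in nhds (c * z), DifferentiableAt ℝ f x :=
    (hf.eventually (by norm_num)).mono fun x h => h.differentiableAt (by norm_num)
  have hcont : ContinuousAt (fun w : ℂ => c * w) z :=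
    (continuous_const.mul continuous_id).continuousAt
  have hpull : ∀ᶠ w in nhds z, DifferentiableAt ℝ f (c * w) := hcont.eventually hfe
  have expand : ∀ (φ : ℂ →L[ℝ] ℝ) (v : ℂ), φ v = v.re * φ 1 + v.im * φ Complex.I := by
    intro φ v
    conv_lhs => rw [show v = v.re • (1 : ℂ) + v.im • Complex.I by
      simp [Complex.real_smul, Complex.re_add_im]]
    rw [map_add, map_smul, map_smul]
    simp [smul_eq_mul]
  have chain : ∀ (g : ℂ → ℝ) (w : ℂ), DifferentiableAt ℝ g (c * w) → ∀ v : ℂ,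
      fderiv ℝ (fun x => g (c * x)) w v = fderiv ℝ g (c * w) (c * v) := by
    intro g w hgw v
    have hL : HasFDerivAt (fun x : ℂ => c * x) (c • ContinuousLinearMap.id ℝ ℂ) w := by
      simpa using (hasFDerivAt_id w).const_mul c
    have H : HasFDerivAt (fun x => g (c * x))
        ((fderiv ℝ g (c * w)).comp (c • ContinuousLinearMap.id ℝ ℂ)) w :=
      hgw.hasFDerivAt.comp w hL
    rw [H.fderiv]
    simp [smul_eq_mul]
  have hdmul : DifferentiableAt ℝ (fun w : ℂ => c * w) z := differentiableAt_id.const_mul c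
  have hdG1 : DifferentiableAt ℝ (fun w => fderiv ℝ f w 1) (c * z) := diffAt_dir hf 1
  have hdGI : DifferentiableAt ℝ (fun w => fderiv ℝ f w Complex.I) (c * z) :=
    diffAt_dir hf Complex.I
  have key : ∀ v : ℂ, fderiv ℝ (fun w => fderiv ℝ (fun x => f (c * x)) w v) z v
      = (c*v).re * ((c*v).re * fderiv ℝ (fun w => fderiv ℝ f w 1) (c*z) 1
          + (c*v).im * fderiv ℝ (fun w => fderiv ℝ f w 1) (c*z) Complex.I)
        + (c*v).im * ((c*v).re * fderiv ℝ (fun w => fderiv ℝ f w Complex.I) (c*z) 1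
          + (c*v).im * fderiv ℝ (fun w => fderiv ℝ f w Complex.I) (c*z) Complex.I) := by
    intro v
    have e1 : (fun w => fderiv ℝ (fun x => f (c * x)) w v) =ᶠ[nhds z]
        (fun w => (c*v).re * fderiv ℝ f (c*w) 1 + (c*v).im * fderiv ℝ f (c*w) Complex.I) := by
      filter_upwards [hpull] with w hw
      rw [chain f w hw v, expand _ (c*v)]
    rw [e1.fderiv_eq]
    have d1 : DifferentiableAt ℝ (fun w => fderiv ℝ f (c*w) 1) z := hdG1.comp z hdmul
    have dI : DifferentiableAt ℝ (fun w => fderiv ℝ f (c*w) Complex.I) z := hdGI.comp z hdmul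
    rw [fderiv_fun_add (d1.const_mul _) (dI.const_mul _), ContinuousLinearMap.add_apply,
      fderiv_const_mul d1, fderiv_const_mul dI]
    simp only [ContinuousLinearMap.smul_apply, smul_eq_mul]
    rw [chain (fun w => fderiv ℝ f w 1) z hdG1 v,
      chain (fun w => fderiv ℝ f w Complex.I) z hdGI v,
      expand _ (c*v), expand _ (c*v)]
  unfold lap
  rw [key 1, key Complex.I]
  simp only [mul_one, Complex.mul_I_re, Complex.mul_I_im]
  rw [Complex.normSq_apply]
  ring

lemma normSq_ω : Complex.normSq ω = 1 := by
  rw [Complex.normSq_eq_norm_sq, ω, Complex.norm_exp]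
  norm_num [Complex.div_re, Complex.mul_re, Complex.mul_im]

theorem stmt16 {H : Type*} [NormedAddCommGroup H] [InnerProductSpace ℂ H] [CompleteSpace H]
    (R : H →ₗᵢ[ℂ] H) (u : ℂ → H) (hu : Differentiable ℂ u) (hne : ∀ k : ℂ, u k ≠ 0)
    (ρ : ℂ → ℂ) (hρ : ∀ k : ℂ, u (ω * k) = ρ k • R (u k)) :
    ∀ k : ℂ,
      lap (fun w => Real.log (‖u w‖ ^ 2)) (ω * k) / 4 =
      lap (fun w => Real.log (‖u w‖ ^ 2)) k / 4 := by
  intro k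
  set f : ℂ → ℝ := fun w => Real.log (‖u w‖ ^ 2) with hf_def
  have hf2 : ∀ x : ℂ, ContDiffAt ℝ 2 f x := by
    intro x
    have hcu : ContDiff ℝ 2 u := (hu.contDiff (n := 2)).restrict_scalars ℝ
    exact (Real.contDiffAt_log.mpr (pow_ne_zero 2 (norm_ne_zero_iff.mpr (hne x)))).comp x
      ((hcu.norm_sq ℂ).contDiffAt)
  set a : ℂ → ℂ := fun w => inner ℂ (R (u k)) (u (ω * w)) with ha_def
  set b : ℂ → ℂ := fun w => inner ℂ (u k) (u w) with hb_def
  have hab : ∀ w, a w = ρ w * b w := by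
    intro w
    simp only [ha_def, hb_def, hρ w, inner_smul_right, R.inner_map_map]
  have hbk : b k ≠ 0 := inner_self_ne_zero.mpr (hne k)
  have hρk : ρ k ≠ 0 := by
    intro h0
    exact hne (ω * k) (by rw [hρ k, h0, zero_smul])
  have hak : a k ≠ 0 := by rw [hab]; exact mul_ne_zero hρk hbk
  have hda : Differentiable ℂ a :=
    (innerSL ℂ (R (u k))).differentiable.comp (hu.comp (differentiable_id.const_mul ω))
  have hdb : Differentiable ℂ b := (innerSL ℂ (u k)).differentiable.comp hu
  have hea : ∀ᶠ w in nhds k, a w ≠ 0 := hda.continuous.continuousAt.eventually_ne hak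
  have heb : ∀ᶠ w in nhds k, b w ≠ 0 := hdb.continuous.continuousAt.eventually_ne hbk
  set q : ℂ → ℂ := fun w => (a w * b k) / (b w * a k) with hq_def
  have hq1 : q k = 1 := by
    rw [hq_def]
    field_simp
  have hqc : ContinuousAt q k :=
    ((hda.continuous.continuousAt.mul continuousAt_const).div
      (hdb.continuous.continuousAt.mul continuousAt_const) (mul_ne_zero hbk hak))
  have hqs : ∀ᶠ w in nhds k, q w ∈ Complex.slitPlane := by
    have hm : Complex.slitPlane ∈ nhds (q k) :=
      Complex.isOpen_slitPlane.mem_nhds (by rw [hq1]; exact Complex.one_mem_slitPlane)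
    exact hqc.eventually_mem hm
  have hqd : ∀ᶠ w in nhds k, DifferentiableAt ℂ q w := by
    filter_upwards [heb] with w hbw
    exact (((hda w).mul_const _).div ((hdb w).mul_const _) (mul_ne_zero hbw hak))
  set C : ℝ := 2 * (Real.log ‖a k‖ - Real.log ‖b k‖) with hC_def
  set G : ℂ → ℂ := fun w => 2 * Complex.log (q w) + (C : ℂ) with hG_def
  have hGd : ∀ᶠ w in nhds k, DifferentiableAt ℂ G w := by
    filter_upwards [hqs, hqd] with w h1 h2
    exact (((Complex.differentiableAt_log h1).comp w h2).const_mul 2).add_const _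
  have hkey : (fun w => f (ω * w)) =ᶠ[nhds k] fun w => f w + (G w).re := by
    filter_upwards [hea, heb] with w haw hbw
    have hρw : ρ w ≠ 0 := fun h0 => haw (by rw [hab w, h0, zero_mul])
    have hnu : ‖u w‖ ≠ 0 := norm_ne_zero_iff.mpr (hne w)
    have h1 : ‖u (ω * w)‖ = ‖ρ w‖ * ‖u w‖ := by
      rw [hρ w, norm_smul, R.norm_map]
    have hρab : ρ w = a w / b w := by
      rw [hab w]; field_simp
    have habs : ‖ρ w‖ ≠ 0 := by
      simp [hρw]
    have lhs : f (ω * w) = 2 * Real.log ‖ρ w‖ + f w := by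
      rw [hf_def]
      simp only
      rw [h1, mul_pow, Real.log_mul (pow_ne_zero 2 habs) (pow_ne_zero 2 hnu),
        Real.log_pow]
      push_cast
      ring
    have hGre : (G w).re = 2 * Real.log ‖ρ w‖ := by
      rw [hG_def]
      rw [show ((2 : ℂ) * Complex.log (q w) + (C:ℂ)).re
          = 2 * (Complex.log (q w)).re + C by simp]
      rw [Complex.log_re, hq_def]
      simp only [norm_div, norm_mul]
      rw [Real.log_div (by simp [haw, hbk]) (by simp [hbw, hak]),
        Real.log_mul (by simp [haw]) (by simp [hbk]),
        Real.log_mul (by simp [hbw]) (by simp [hak]),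
        hρab, norm_div, Real.log_div (by simp [haw]) (by simp [hbw]), hC_def]
      ring
    rw [lhs, hGre]; ring
  have hGre_cd : ContDiffAt ℝ 2 (fun w => (G w).re) k := by
    have hGa : AnalyticAt ℂ G k := Complex.analyticAt_iff_eventually_differentiableAt.mpr hGd
    have h2 : ContDiffAt ℂ 2 G k := hGa.contDiffAt
    exact (Complex.reCLM.contDiff.contDiffAt).comp k (h2.restrict_scalars ℝ)
  have main : lap f (ω * k) = lap f k := by
    calc lap f (ω * k) = lap (fun w => f (ω * w)) k := by
          rw [lap_comp ω (hf2 (ω * k)), normSq_ω, one_mul]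
      _ = lap (fun w => f w + (G w).re) k := lap_congr hkey
      _ = lap f k + lap (fun w => (G w).re) k := lap_add (hf2 k) hGre_cd
      _ = lap f k := by rw [lap_re_holo hGd, add_zero]
  rw [main]

end
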